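/- For every even integer q ≥ 2, with I_k = k!/(2^{k/2} (k/2)!) for even k, define N_q = Σ_{j=1}^{q/2} Σ_{0=k_0<k_1<⋯<k_j=q, all k_i even} C(q,k_1) C(q−k_1, q−k_2) ⋯ C(q−k_{j−1}, q−k_j) · I_{k_1} I_{k_2−k_1} ⋯ I_{k_j−k_{j−1}} · (−1)^{j+1}. Then N_q = (−1)^{q/2+1} I_q. -/

import Mathlib

open Finset

/-- `pairCount k = k! / (2^(k/2) (k/2)!)`, the number of partitions of a set of `k`
elements into `k/2` pairs (for `k` even). -/
noncomputable def pairCount (k : ℕ) : ℚ :=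
  (Nat.factorial k : ℚ) / (2 ^ (k / 2) * Nat.factorial (k / 2))

open scoped Classical

noncomputable def chainSet (q j : ℕ) : Finset (Fin (j + 1) → Fin (q + 1)) :=
  Finset.univ.filter
    (fun k => (k 0 : ℕ) = 0 ∧ (k (Fin.last j) : ℕ) = q ∧ StrictMono k ∧
      ∀ s, Even (k s : ℕ))

noncomputable def chainTerm (q : ℕ) {j : ℕ} (k : Fin (j + 1) → Fin (q + 1)) : ℚ :=
  ∏ s : Fin j,
    (Nat.choose (q - (k s.castSucc : ℕ)) (q - (k s.succ : ℕ)) : ℚ) *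
      pairCount ((k s.succ : ℕ) - (k s.castSucc : ℕ))

noncomputable def T (q : ℕ) : ℚ :=
  ∑ j ∈ Finset.Icc 1 (q / 2), ∑ k ∈ chainSet q j, (-1 : ℚ) ^ (j + 1) * chainTerm q k

lemma pairCount_two_mul (n : ℕ) :
    pairCount (2 * n) = (Nat.factorial (2 * n) : ℚ) / (2 ^ n * Nat.factorial n) := by
  simp [pairCount, Nat.mul_div_cancel_left]

lemma key_pc (n m : ℕ) (hm : m ≤ n) :
    (Nat.choose (2 * n) (2 * m) : ℚ) * pairCount (2 * m) * pairCount (2 * n - 2 * m) =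
      pairCount (2 * n) * Nat.choose n m := by
  have h1 : 2 * n - 2 * m = 2 * (n - m) := by omega
  rw [h1, pairCount_two_mul, pairCount_two_mul, pairCount_two_mul,
    Nat.cast_choose ℚ (by omega : 2 * m ≤ 2 * n), Nat.cast_choose ℚ hm, h1]
  have f1 : (Nat.factorial (2 * m) : ℚ) ≠ 0 := by positivity
  have f2 : (Nat.factorial (2 * (n - m)) : ℚ) ≠ 0 := by positivity
  have f3 : (Nat.factorial m : ℚ) ≠ 0 := by positivity
  have f4 : (Nat.factorial (n - m) : ℚ) ≠ 0 := by positivity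
  have f5 : (Nat.factorial n : ℚ) ≠ 0 := by positivity
  have hp : (2 : ℚ) ^ m * 2 ^ (n - m) = 2 ^ n := by
    rw [← pow_add]; congr 1; omega
  field_simp
  rw [← hp]

lemma chain_lower {q j : ℕ} {k : Fin (j + 1) → Fin (q + 1)} (hk : k ∈ chainSet q j) :
    ∀ s : Fin (j + 1), 2 * (s : ℕ) ≤ (k s : ℕ) := by
  simp only [chainSet, Finset.mem_filter, Finset.mem_univ, true_and] at hk
  obtain ⟨h0, hlast, hmono, hev⟩ := hk
  intro s
  induction s using Fin.induction with
  | zero => simp [h0]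
  | succ i ih =>
    have h1 : (k i.castSucc : ℕ) < k i.succ := hmono Fin.castSucc_lt_succ
    obtain ⟨a, ha⟩ := hev i.castSucc
    obtain ⟨b, hb⟩ := hev i.succ
    simp only [Fin.coe_castSucc, Fin.val_succ] at *
    omega

lemma chainSet_eq_empty {q j : ℕ} (h : q < 2 * j) : chainSet q j = ∅ := by
  rw [Finset.eq_empty_iff_forall_notMem]
  intro k hk
  have := chain_lower hk (Fin.last j)
  have hlast : (k (Fin.last j) : ℕ) = q := by
    simp only [chainSet, Finset.mem_filter] at hk; exact hk.2.2.1
  simp [Fin.last] at this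
  omega

lemma sum_j1 {q : ℕ} (hq2 : 2 ≤ q) (hqe : Even q) :
    ∑ k ∈ chainSet q 1, chainTerm q k = pairCount q := by
  have hsingle : chainSet q 1 = {![(⟨0, by omega⟩ : Fin (q + 1)), ⟨q, by omega⟩]} := by
    ext k
    simp only [chainSet, Finset.mem_filter, Finset.mem_univ, true_and,
      Finset.mem_singleton]
    constructor
    · rintro ⟨h0, hlast, hmono, hev⟩
      funext i
      match i with
      | 0 => exact Fin.ext (by simpa using h0)
      | 1 => exact Fin.ext (by simpa [Fin.last] using hlast)
    · rintro rfl
      refine ⟨rfl, rfl, ?_, ?_⟩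
      · intro a b hab
        match a, b with
        | 0, 1 =>
          show ((⟨0, by omega⟩ : Fin (q+1)) : ℕ) < (⟨q, by omega⟩ : Fin (q+1))
          simpa using (by omega : 0 < q)
        | 0, 0 => exact absurd hab (lt_irrefl _)
        | 1, 1 => exact absurd hab (lt_irrefl _)
        | 1, 0 => exact absurd hab (by decide)
      · intro s
        match s with
        | 0 => simp
        | 1 => simpa [Fin.last] using hqe
  rw [hsingle, Finset.sum_singleton]
  simp [chainTerm]

lemma mem_chainSet_iff {q j : ℕ} {k : Fin (j + 1) → Fin (q + 1)} :
    k ∈ chainSet q j ↔ (k 0 : ℕ) = 0 ∧ (k (Fin.last j) : ℕ) = q ∧ StrictMono k ∧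
      ∀ s, Even (k s : ℕ) := by
  simp [chainSet]

lemma sum_split (q j : ℕ) (hqe : Even q) (hj : 1 ≤ j) :
    ∑ k ∈ chainSet q (j + 1), chainTerm q k =
      ∑ m ∈ Finset.Icc 1 (q / 2 - 1),
        (Nat.choose q (q - 2 * m) : ℚ) * pairCount (2 * m) *
          ∑ k' ∈ chainSet (q - 2 * m) j, chainTerm (q - 2 * m) k' := by
  obtain ⟨Q, hQ⟩ := hqe
  have hmaps : ∀ k ∈ chainSet q (j + 1),
      ((k 1 : ℕ) / 2) ∈ Finset.Icc 1 (q / 2 - 1) := by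
    intro k hk
    obtain ⟨h0, hlast, hmono, hev⟩ := mem_chainSet_iff.mp hk
    have h01 : (0 : Fin (j + 2)) < 1 := by
      rw [Fin.lt_def]; simp [Fin.val_one]
    have hpos : (k 0 : ℕ) < (k 1 : ℕ) := hmono h01
    have h1last : (1 : Fin (j + 2)) < Fin.last (j + 1) := by
      rw [Fin.lt_def]; simp [Fin.val_one, Fin.last]; omega
    have hlt : (k 1 : ℕ) < (k (Fin.last (j + 1)) : ℕ) := hmono h1last
    obtain ⟨c, hc⟩ := hev 1
    simp only [Finset.mem_Icc]
    omega
  rw [← Finset.sum_fiberwise_of_maps_to hmaps (chainTerm q)]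
  refine Finset.sum_congr rfl ?_
  intro m hm
  simp only [Finset.mem_Icc] at hm
  have h2m : 2 * m + 2 ≤ q := by omega
  rw [Finset.mul_sum]
  refine Finset.sum_nbij'
    (i := fun k => fun i : Fin (j + 1) =>
      (⟨(k i.succ : ℕ) - 2 * m, by have := (k i.succ).isLt; omega⟩ : Fin (q - 2 * m + 1)))
    (j := fun k' => fun i : Fin (j + 2) =>
      Fin.cases (⟨0, by omega⟩ : Fin (q + 1))
        (fun i' => ⟨(k' i' : ℕ) + 2 * m, by have := (k' i').isLt; omega⟩) i)
    ?_ ?_ ?_ ?_ ?_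
  · -- forward membership
    intro k hk
    simp only [Finset.mem_filter] at hk
    obtain ⟨hk, hfib⟩ := hk
    obtain ⟨h0, hlast, hmono, hev⟩ := mem_chainSet_iff.mp hk
    obtain ⟨c, hc⟩ := hev 1
    have hk1 : (k 1 : ℕ) = 2 * m := by omega
    have hge : ∀ i : Fin (j + 1), 2 * m ≤ (k i.succ : ℕ) := by
      intro i
      have : (1 : Fin (j + 2)) ≤ i.succ := by
        rw [Fin.le_def]; simp [Fin.val_one]
      have := hmono.monotone this
      omega
    refine mem_chainSet_iff.mpr ⟨?_, ?_, ?_, ?_⟩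
    · show ((k (0 : Fin (j + 1)).succ : ℕ) - 2 * m) = 0
      rw [Fin.succ_zero_eq_one, hk1]; omega
    · show ((k (Fin.last j).succ : ℕ) - 2 * m) = q - 2 * m
      rw [Fin.succ_last, hlast]
    · intro a b hab
      have h1 := hmono (Fin.succ_lt_succ_iff.mpr hab)
      have h2 := hge a
      show (k a.succ : ℕ) - 2 * m < (k b.succ : ℕ) - 2 * m
      omega
    · intro s
      obtain ⟨d, hd⟩ := hev s.succ
      have := hge s
      show Even ((k s.succ : ℕ) - 2 * m)
      exact ⟨d - m, by omega⟩
  · -- backward membership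
    intro k' hk'
    obtain ⟨h0, hlast, hmono, hev⟩ := mem_chainSet_iff.mp hk'
    refine Finset.mem_filter.mpr ⟨mem_chainSet_iff.mpr ⟨?_, ?_, ?_, ?_⟩, ?_⟩
    · simp
    · rw [show (Fin.last (j + 1)) = (Fin.last j).succ from (Fin.succ_last j).symm]
      simp only [Fin.cases_succ]
      show (k' (Fin.last j) : ℕ) + 2 * m = q
      omega
    · intro a b hab
      induction a using Fin.cases with
      | zero =>
        induction b using Fin.cases with
        | zero => exact absurd hab (lt_irrefl _)
        | succ b' =>
          simp only [Fin.cases_zero, Fin.cases_succ, Fin.lt_def]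
          show (0 : ℕ) < (k' b' : ℕ) + 2 * m
          omega
      | succ a' =>
        induction b using Fin.cases with
        | zero => exact absurd hab (by simp [Fin.lt_def])
        | succ b' =>
          have hab' : a' < b' := Fin.succ_lt_succ_iff.mp hab
          have hv : (k' a' : ℕ) < (k' b' : ℕ) := hmono hab'
          simp only [Fin.cases_succ, Fin.lt_def]
          show (k' a' : ℕ) + 2 * m < (k' b' : ℕ) + 2 * m
          omega
    · intro s
      induction s using Fin.cases with
      | zero => exact ⟨0, by simp⟩
      | succ s' =>
        simp only [Fin.cases_succ]
        obtain ⟨d, hd⟩ := hev s'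
        show Even ((k' s' : ℕ) + 2 * m)
        exact ⟨d + m, by omega⟩
    · rw [show (1 : Fin (j + 2)) = (0 : Fin (j + 1)).succ from (Fin.succ_zero_eq_one).symm]
      simp only [Fin.cases_succ]
      show ((k' 0 : ℕ) + 2 * m) / 2 = m
      omega
  · -- left inverse
    intro k hk
    simp only [Finset.mem_filter] at hk
    obtain ⟨hk, hfib⟩ := hk
    obtain ⟨h0, hlast, hmono, hev⟩ := mem_chainSet_iff.mp hk
    obtain ⟨c, hc⟩ := hev 1
    have hk1 : (k 1 : ℕ) = 2 * m := by omega
    have hge : ∀ i : Fin (j + 1), 2 * m ≤ (k i.succ : ℕ) := by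
      intro i
      have : (1 : Fin (j + 2)) ≤ i.succ := by
        rw [Fin.le_def]; simp [Fin.val_one]
      have := hmono.monotone this
      omega
    funext i
    induction i using Fin.cases with
    | zero => exact Fin.ext (by simp [h0])
    | succ i' =>
      apply Fin.ext
      simp only [Fin.cases_succ]
      show ((k i'.succ : ℕ) - 2 * m) + 2 * m = (k i'.succ : ℕ)
      have := hge i'
      omega
  · -- right inverse
    intro k' hk'
    funext i
    apply Fin.ext
    simp only [Fin.cases_succ]
    show ((k' i : ℕ) + 2 * m) - 2 * m = (k' i : ℕ)
    omega
  · -- term equality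
    intro k hk
    simp only [Finset.mem_filter] at hk
    obtain ⟨hk, hfib⟩ := hk
    obtain ⟨h0, hlast, hmono, hev⟩ := mem_chainSet_iff.mp hk
    obtain ⟨c, hc⟩ := hev 1
    have hk1 : (k 1 : ℕ) = 2 * m := by omega
    have hge : ∀ i : Fin (j + 1), 2 * m ≤ (k i.succ : ℕ) := by
      intro i
      have : (1 : Fin (j + 2)) ≤ i.succ := by
        rw [Fin.le_def]; simp [Fin.val_one]
      have := hmono.monotone this
      omega
    show chainTerm q k = _ * chainTerm (q - 2 * m) _
    unfold chainTerm
    rw [Fin.prod_univ_succ]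
    have e0 : ((0 : Fin (j + 1)).castSucc : Fin (j + 2)) = 0 := rfl
    have e1 : ((0 : Fin (j + 1)).succ : Fin (j + 2)) = 1 := Fin.succ_zero_eq_one
    congr 1
    · rw [e0, e1, h0, hk1]
      norm_num
    · refine Finset.prod_congr rfl ?_
      intro s _
      have hcs : s.succ.castSucc = s.castSucc.succ := (Fin.succ_castSucc s).symm
      have g1 : 2 * m ≤ (k s.castSucc.succ : ℕ) := hge s.castSucc
      have g2 : 2 * m ≤ (k s.succ.succ : ℕ) := hge s.succ
      have a1 : q - (k s.succ.castSucc : ℕ)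
          = (q - 2 * m) - ((k s.castSucc.succ : ℕ) - 2 * m) := by rw [hcs]; omega
      have a2 : q - (k s.succ.succ : ℕ)
          = (q - 2 * m) - ((k s.succ.succ : ℕ) - 2 * m) := by omega
      have a3 : (k s.succ.succ : ℕ) - (k s.succ.castSucc : ℕ)
          = ((k s.succ.succ : ℕ) - 2 * m) - ((k s.castSucc.succ : ℕ) - 2 * m) := by
        rw [hcs]; omega
      rw [a1, a2, a3]

lemma alt_sum (n : ℕ) (hn : 1 ≤ n) :
    ∑ m ∈ Finset.Icc 1 (n - 1), (-1 : ℚ) ^ (n - m + 1) * (Nat.choose n m : ℚ) =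
      (-1) ^ n + 1 := by
  have base : ∑ m ∈ Finset.range (n + 1), (-1 : ℚ) ^ m * (Nat.choose n m : ℚ) = 0 := by
    have h := Int.alternating_sum_range_choose (n := n)
    rw [if_neg (by omega)] at h
    have := congrArg (fun z : ℤ => (z : ℚ)) h
    push_cast at this
    simpa using this
  have h1 : Finset.range (n + 1) = insert 0 (Finset.Icc 1 n) := by
    ext x; simp; omega
  have h2 : Finset.Icc 1 n = insert n (Finset.Icc 1 (n - 1)) := by
    ext x; simp; omega
  rw [h1, Finset.sum_insert (by simp), h2,
    Finset.sum_insert (by simp; omega)] at base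
  have hS : ∑ m ∈ Finset.Icc 1 (n - 1), (-1 : ℚ) ^ m * (Nat.choose n m : ℚ)
      = -1 - (-1) ^ n := by
    simp only [pow_zero, Nat.choose_zero_right, Nat.choose_self] at base
    push_cast at base
    linarith [base]
  have hcongr : ∀ m ∈ Finset.Icc 1 (n - 1),
      (-1 : ℚ) ^ (n - m + 1) * (Nat.choose n m : ℚ)
        = (-1) ^ (n + 1) * ((-1) ^ m * (Nat.choose n m : ℚ)) := by
    intro m hm
    simp only [Finset.mem_Icc] at hm
    have e1 : (-1 : ℚ) ^ (n - m + 1) = (-1) ^ (n - m + 1) * (-1) ^ (2 * m) := by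
      rw [pow_mul]; norm_num
    rw [e1, ← pow_add, show n - m + 1 + 2 * m = (n + 1) + m by omega, pow_add]
    ring
  rw [Finset.sum_congr rfl hcongr, ← Finset.mul_sum, hS, pow_succ]
  ring_nf
  rw [mul_comm n 2, pow_mul]
  norm_num
  ring

lemma T_rec {q : ℕ} (hq2 : 2 ≤ q) (hqe : Even q) :
    T q = pairCount q - ∑ m ∈ Finset.Icc 1 (q / 2 - 1),
      (Nat.choose q (q - 2 * m) : ℚ) * pairCount (2 * m) * T (q - 2 * m) := by
  obtain ⟨Q, hQ⟩ := hqe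
  have hsplit : Finset.Icc 1 (q / 2) = insert 1 (Finset.Icc 2 (q / 2)) := by
    ext x; simp only [Finset.mem_Icc, Finset.mem_insert]; omega
  rw [T, hsplit, Finset.sum_insert (by simp)]
  have h1term : ∑ k ∈ chainSet q 1, (-1 : ℚ) ^ (1 + 1) * chainTerm q k = pairCount q := by
    simpa using sum_j1 hq2 ⟨Q, hQ⟩
  rw [h1term]
  have reindex :
      ∑ j ∈ Finset.Icc 2 (q / 2), ∑ k ∈ chainSet q j, (-1 : ℚ) ^ (j + 1) * chainTerm q k
        = ∑ j ∈ Finset.Icc 1 (q / 2 - 1),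
            (-1 : ℚ) ^ (j + 2) * ∑ k ∈ chainSet q (j + 1), chainTerm q k := by
    refine Finset.sum_nbij' (fun a => a - 1) (fun a => a + 1) ?_ ?_ ?_ ?_ ?_
    · intro a ha; simp only [Finset.mem_Icc] at *; omega
    · intro a ha; simp only [Finset.mem_Icc] at *; omega
    · intro a ha; simp only [Finset.mem_Icc] at ha
      show a - 1 + 1 = a
      omega
    · intro a ha; simp only [Finset.mem_Icc] at ha
      show a + 1 - 1 = a
      omega
    · intro a ha; simp only [Finset.mem_Icc] at ha
      obtain ⟨b, rfl⟩ : ∃ b, a = b + 1 := ⟨a - 1, by omega⟩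
      show _ = (-1 : ℚ) ^ (b + 1 - 1 + 2) * ∑ k ∈ chainSet q (b + 1 - 1 + 1), chainTerm q k
      simp only [Nat.add_sub_cancel]
      rw [← Finset.mul_sum]
      norm_num
      rfl
  rw [reindex]
  have happ : ∀ j ∈ Finset.Icc 1 (q / 2 - 1),
      (-1 : ℚ) ^ (j + 2) * ∑ k ∈ chainSet q (j + 1), chainTerm q k
        = ∑ m ∈ Finset.Icc 1 (q / 2 - 1),
            (-1 : ℚ) ^ (j + 2) * ((Nat.choose q (q - 2 * m) : ℚ) * pairCount (2 * m) *
              ∑ k' ∈ chainSet (q - 2 * m) j, chainTerm (q - 2 * m) k') := by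
    intro j hj
    simp only [Finset.mem_Icc] at hj
    rw [sum_split q j ⟨Q, hQ⟩ hj.1, Finset.mul_sum]
  rw [Finset.sum_congr rfl happ, Finset.sum_comm]
  have hm' : ∀ m ∈ Finset.Icc 1 (q / 2 - 1),
      (∑ j ∈ Finset.Icc 1 (q / 2 - 1),
        (-1 : ℚ) ^ (j + 2) * ((Nat.choose q (q - 2 * m) : ℚ) * pairCount (2 * m) *
          ∑ k' ∈ chainSet (q - 2 * m) j, chainTerm (q - 2 * m) k'))
        = -((Nat.choose q (q - 2 * m) : ℚ) * pairCount (2 * m) * T (q - 2 * m)) := by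
    intro m hm
    simp only [Finset.mem_Icc] at hm
    have hTm : T (q - 2 * m) = ∑ j ∈ Finset.Icc 1 (q / 2 - 1),
        ∑ k ∈ chainSet (q - 2 * m) j, (-1 : ℚ) ^ (j + 1) * chainTerm (q - 2 * m) k := by
      rw [T]
      apply Finset.sum_subset
      · intro x hx; simp only [Finset.mem_Icc] at *; omega
      · intro x hx hnx
        simp only [Finset.mem_Icc] at hx hnx
        rw [chainSet_eq_empty (by omega), Finset.sum_empty]
    rw [hTm, Finset.mul_sum, ← Finset.sum_neg_distrib]
    refine Finset.sum_congr rfl ?_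
    intro j hj
    rw [← Finset.mul_sum, show j + 2 = (j + 1) + 1 from rfl, pow_succ]
    ring
  rw [Finset.sum_congr rfl hm', Finset.sum_neg_distrib]
  ring

lemma T_eq : ∀ q : ℕ, 2 ≤ q → Even q → T q = (-1 : ℚ) ^ (q / 2 + 1) * pairCount q := by
  intro q
  induction q using Nat.strong_induction_on with
  | _ q ih =>
    intro hq2 hqe
    obtain ⟨Q, hQ⟩ := hqe
    rw [T_rec hq2 ⟨Q, hQ⟩]
    set n := q / 2 with hn'
    have hn1 : 1 ≤ n := by omega
    have hterm : ∀ m ∈ Finset.Icc 1 (n - 1),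
        (Nat.choose q (q - 2 * m) : ℚ) * pairCount (2 * m) * T (q - 2 * m)
          = pairCount q * ((-1 : ℚ) ^ (n - m + 1) * (Nat.choose n m : ℚ)) := by
      intro m hm
      simp only [Finset.mem_Icc] at hm
      have h1 : q - 2 * m < q := by omega
      have h2 : 2 ≤ q - 2 * m := by omega
      have h3 : Even (q - 2 * m) := ⟨Q - m, by omega⟩
      have hIH := ih (q - 2 * m) h1 h2 h3
      have hdiv : (q - 2 * m) / 2 = n - m := by omega
      rw [hdiv] at hIH
      rw [hIH, Nat.choose_symm (show 2 * m ≤ q by omega)]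
      have e1 : q = 2 * n := by omega
      calc (Nat.choose q (2 * m) : ℚ) * pairCount (2 * m) *
              ((-1 : ℚ) ^ (n - m + 1) * pairCount (q - 2 * m))
          = (-1 : ℚ) ^ (n - m + 1) *
              ((Nat.choose (2 * n) (2 * m) : ℚ) * pairCount (2 * m) *
                pairCount (2 * n - 2 * m)) := by
            rw [← e1]; ring
        _ = (-1 : ℚ) ^ (n - m + 1) * (pairCount (2 * n) * (Nat.choose n m : ℚ)) := by
            rw [key_pc n m (by omega)]
        _ = pairCount q * ((-1 : ℚ) ^ (n - m + 1) * (Nat.choose n m : ℚ)) := by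
            rw [← e1]; ring
    rw [Finset.sum_congr rfl hterm, ← Finset.mul_sum, alt_sum n hn1, pow_succ]
    ring


open scoped Classical in
theorem stmt0 (q : ℕ) (hq2 : 2 ≤ q) (hqe : Even q) :
    ∑ j ∈ Finset.Icc 1 (q / 2),
      ∑ k ∈ Finset.univ.filter
          (fun k : Fin (j + 1) → Fin (q + 1) =>
            (k 0 : ℕ) = 0 ∧ (k (Fin.last j) : ℕ) = q ∧ StrictMono k ∧
              ∀ s, Even (k s : ℕ)),
        (-1 : ℚ) ^ (j + 1) *
          ∏ s : Fin j,
            (Nat.choose (q - (k s.castSucc : ℕ)) (q - (k s.succ : ℕ)) : ℚ) *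
              pairCount ((k s.succ : ℕ) - (k s.castSucc : ℕ))
      = (-1 : ℚ) ^ (q / 2 + 1) * pairCount q := by
  exact T_eq q hq2 hqe
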